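/- Let n ≥ k ≥ 1. Any independent k-fold banned binary sequence problem of length n has at most ∑_{i=0}^{k−1} C(n,i) solutions. -/

import Mathlib

/-- `Y` is a solution to the `k`-fold banned binary sequence problem `f` of length `n`. -/
def IsSolution (n k : ℕ)
    (f : (S : Finset (Fin n)) → ({i : Fin n // i ∉ S} → Bool) →
      Set ({i : Fin n // i ∈ S} → Bool))
    (Y : Fin n → Bool) : Prop :=
  ∀ S : Finset (Fin n), S.card = k →
    (fun i : {i : Fin n // i ∈ S} => Y i.1) ∉ f S (fun i => Y i.1)

/-- A banned binary sequence problem is independent if `f(S,X) = f(S,Y)` for all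
`X, Y : [n]∖S → {0,1}`. -/
def Independent (n : ℕ)
    (f : (S : Finset (Fin n)) → ({i : Fin n // i ∉ S} → Bool) →
      Set ({i : Fin n // i ∈ S} → Bool)) : Prop :=
  ∀ (S : Finset (Fin n)) (X Y : {i : Fin n // i ∉ S} → Bool), f S X = f S Y

/-- Any independent `k`-fold banned binary sequence problem of length `n` (with `n ≥ k ≥ 1`)
has at most `∑_{i=0}^{k−1} C(n,i)` solutions. -/
theorem independent_bbsp_card_solutions_le (n k : ℕ) (hk : 1 ≤ k) (hkn : k ≤ n)
    (f : (S : Finset (Fin n)) → ({i : Fin n // i ∉ S} → Bool) →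
      Set ({i : Fin n // i ∈ S} → Bool))
    (hne : ∀ (S : Finset (Fin n)) (X : {i : Fin n // i ∉ S} → Bool),
      S.card = k → (f S X).Nonempty)
    (hind : Independent n f) :
    {Y : Fin n → Bool | IsSolution n k f Y}.ncard ≤
      ∑ i ∈ Finset.range k, n.choose i := by
  classical
  set sol : Finset (Fin n → Bool) := {Y | IsSolution n k f Y}.toFinset with hsol
  set 𝒜 : Finset (Finset (Fin n)) :=
    sol.image (fun Y => Finset.univ.filter (fun i => Y i = true)) with h𝒜
  have hcard : {Y : Fin n → Bool | IsSolution n k f Y}.ncard = 𝒜.card := by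
    rw [Set.ncard_eq_toFinset_card']
    rw [h𝒜]
    rw [Finset.card_image_of_injective]
    intro Y Z h
    dsimp only at h
    funext i
    have : (i ∈ Finset.univ.filter (fun j => Y j = true)) ↔
        (i ∈ Finset.univ.filter (fun j => Z j = true)) := by rw [h]
    simp only [Finset.mem_filter, Finset.mem_univ, true_and] at this
    cases hY : Y i <;> cases hZ : Z i <;> simp_all
  -- No k-set is shattered
  have hnoshat : ∀ s : Finset (Fin n), s.card = k → ¬ 𝒜.Shatters s := by
    intro s hs hsh
    obtain ⟨Z, hZ⟩ := hne s (fun _ => false) hs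
    set t : Finset (Fin n) := Finset.univ.filter
      (fun i => ∃ h : i ∈ s, Z ⟨i, h⟩ = true) with ht
    have hts : t ⊆ s := by
      intro i hi
      simp only [ht, Finset.mem_filter] at hi
      exact hi.2.1
    obtain ⟨u, hu, hsu⟩ := hsh hts
    rw [h𝒜, Finset.mem_image] at hu
    obtain ⟨Y, hY, rfl⟩ := hu
    rw [hsol, Set.mem_toFinset] at hY
    have hYZ : (fun i : {i : Fin n // i ∈ s} => Y i.1) = Z := by
      funext i
      have hmem : i.1 ∈ s ∩ Finset.univ.filter (fun j => Y j = true) ↔ i.1 ∈ t := by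
        rw [hsu]
      rw [Finset.mem_inter, Finset.mem_filter, ht, Finset.mem_filter] at hmem
      simp only [Finset.mem_univ, true_and] at hmem
      rw [Bool.eq_iff_iff]
      constructor
      · intro hy
        obtain ⟨h, hz⟩ := hmem.mp ⟨i.2, hy⟩
        exact hz
      · intro hz
        exact (hmem.mpr ⟨i.2, hz⟩).2
    have := hY s hs
    rw [hYZ, hind s _ (fun _ => false)] at this
    exact this hZ
  -- vcDim bound
  have hvc : 𝒜.vcDim ≤ k - 1 := by
    rw [Finset.vcDim]
    apply Finset.sup_le
    intro s hs
    rw [Finset.mem_shatterer] at hs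
    by_contra h
    push_neg at h
    have hk' : k ≤ s.card := by omega
    obtain ⟨s', hs's, hs'⟩ := Finset.exists_subset_card_eq hk'
    exact hnoshat s' hs' (hs.mono_right hs's)
  calc {Y : Fin n → Bool | IsSolution n k f Y}.ncard = 𝒜.card := hcard
    _ ≤ 𝒜.shatterer.card := Finset.card_le_card_shatterer 𝒜
    _ ≤ ∑ i ∈ Finset.Iic 𝒜.vcDim, (Fintype.card (Fin n)).choose i :=
        Finset.card_shatterer_le_sum_vcDim
    _ ≤ ∑ i ∈ Finset.range k, n.choose i := by
        simp only [Fintype.card_fin]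
        apply Finset.sum_le_sum_of_subset
        intro i hi
        simp only [Finset.mem_Iic] at hi
        simp only [Finset.mem_range]
        omega
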